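/- Let γ = 2t/k with γ ≤ 1 and let l be a positive integer. Suppose ak ≤ 2t for some fixed a > 0. Then ∫_{3π/4}^{5π/4} exp(-(2√2/3)·k·(1 + γ cos θ)^{3/2}) dθ ≤ exp(-(2√2/3)·k·(1-γ)^{3/2}) · ∫_{3π/4}^{5π/4} exp(-(a^{3/2}/(3·2^{3/4}))·k·|θ - π|³) dθ, and the latter integral is O(k^{-1/3}) as k → ∞. -/

import Mathlib

open Real Asymptotics Filter

lemma aux_rpow_superadd {x y : ℝ} (hx : 0 ≤ x) (hy : 0 ≤ y) :
    x ^ ((3:ℝ)/2) + y ^ ((3:ℝ)/2) ≤ (x + y) ^ ((3:ℝ)/2) := by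
  have h := NNReal.add_rpow_le_rpow_add (Real.toNNReal x) (Real.toNNReal y)
    (by norm_num : (1:ℝ) ≤ 3/2)
  have h' := NNReal.coe_le_coe.mpr h
  simpa [NNReal.coe_rpow, Real.coe_toNNReal x hx, Real.coe_toNNReal y hy,
    ← Real.toNNReal_add hx hy,
    sup_eq_left.mpr (by positivity : (0:ℝ) ≤ x + y)] using h'

lemma aux_one_sub_cos {x : ℝ} (hx : |x| ≤ π/4) :
    x^2 / (2 * Real.sqrt 2) ≤ 1 - Real.cos x := by
  have hpi : π < 3.15 := Real.pi_lt_d2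
  have hpi0 : 0 < π := Real.pi_pos
  have hx1 : |x| ≤ 1 := hx.trans (by nlinarith)
  have hb := Real.cos_bound hx1
  have habs : |x|^4 = (x^2)^2 := by
    rw [show (4:ℕ) = 2*2 from rfl, pow_mul, sq_abs]
  have hx2 : x^2 ≤ (π/4)^2 := by
    nlinarith [sq_abs x, abs_nonneg x]
  have hcos : Real.cos x ≤ 1 - x^2/2 + (x^2)^2 * (5/96) := by
    have := (abs_le.mp hb).2
    nlinarith [habs]
  have hs : Real.sqrt 2 * Real.sqrt 2 = 2 := Real.mul_self_sqrt (by norm_num)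
  have hs1 : (1.414:ℝ) ≤ Real.sqrt 2 := by nlinarith [Real.sqrt_nonneg 2]
  have hkey : x^2 * (1/2 - (π/4)^2 * (5/96)) ≤ 1 - Real.cos x := by
    nlinarith [sq_nonneg x]
  have hc : 1 / (2 * Real.sqrt 2) ≤ 1/2 - (π/4)^2 * (5/96) := by
    rw [div_le_iff₀ (by nlinarith)]
    nlinarith
  calc x^2 / (2 * Real.sqrt 2) = x^2 * (1 / (2 * Real.sqrt 2)) := by ring
    _ ≤ x^2 * (1/2 - (π/4)^2 * (5/96)) := by
        apply mul_le_mul_of_nonneg_left hc (sq_nonneg x)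
    _ ≤ 1 - Real.cos x := hkey

lemma aux_pointwise (a γ : ℝ) (ha : 0 < a) (haγ : a ≤ γ) (hγ1 : γ ≤ 1) (k : ℝ) (hk : 0 ≤ k)
    (θ : ℝ) (hθ : θ ∈ Set.Icc (3*π/4) (5*π/4)) :
    Real.exp (-(2 * Real.sqrt 2 / 3) * k * (1 + γ * Real.cos θ) ^ ((3:ℝ)/2))
      ≤ Real.exp (-(2 * Real.sqrt 2 / 3) * k * (1 - γ) ^ ((3:ℝ)/2)) *
        Real.exp (-(a ^ ((3:ℝ)/2) / (3 * (2:ℝ) ^ ((3:ℝ)/4))) * k * |θ - π| ^ 3) := by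
  have hγ0 : 0 < γ := lt_of_lt_of_le ha haγ
  obtain ⟨hθ1, hθ2⟩ := hθ
  have hcosθ : Real.cos θ = -Real.cos (θ - π) := by
    rw [show θ = (θ - π) + π by ring, Real.cos_add_pi]; ring_nf
  have hx : |θ - π| ≤ π/4 := abs_le.mpr ⟨by linarith, by linarith⟩
  have hquad : (θ - π)^2 / (2 * Real.sqrt 2) ≤ 1 + Real.cos θ := by
    have h := aux_one_sub_cos hx
    rw [hcosθ]; linarith
  have h1c : 0 ≤ 1 + Real.cos θ := le_trans (by positivity) hquad
  have h1γ : 0 ≤ 1 - γ := by linarith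
  have hsum : (1-γ) ^ ((3:ℝ)/2) + (γ*(1+Real.cos θ)) ^ ((3:ℝ)/2)
      ≤ (1 + γ * Real.cos θ) ^ ((3:ℝ)/2) := by
    have h := aux_rpow_superadd h1γ (by positivity : (0:ℝ) ≤ γ*(1+Real.cos θ))
    rwa [show (1-γ) + γ*(1+Real.cos θ) = 1 + γ*Real.cos θ by ring] at h
  have hmulγ : (γ*(1+Real.cos θ)) ^ ((3:ℝ)/2) = γ ^ ((3:ℝ)/2) * (1+Real.cos θ) ^ ((3:ℝ)/2) :=
    Real.mul_rpow hγ0.le h1c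
  have hγ32 : a ^ ((3:ℝ)/2) ≤ γ ^ ((3:ℝ)/2) := Real.rpow_le_rpow ha.le haγ (by norm_num)
  have hmono : ((θ-π)^2/(2*Real.sqrt 2)) ^ ((3:ℝ)/2) ≤ (1+Real.cos θ) ^ ((3:ℝ)/2) :=
    Real.rpow_le_rpow (by positivity) hquad (by norm_num)
  set A := (2:ℝ) ^ ((3:ℝ)/4) with hA
  have hA0 : 0 < A := Real.rpow_pos_of_pos two_pos _
  have hAA : A * A = 2 * Real.sqrt 2 := by
    rw [hA, ← Real.rpow_add two_pos, Real.sqrt_eq_rpow,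
      show (3:ℝ)/4 + 3/4 = 1 + 1/2 by norm_num, Real.rpow_add two_pos, Real.rpow_one]
  have hval : ((θ-π)^2/(2*Real.sqrt 2)) ^ ((3:ℝ)/2) = |θ-π|^3 / A^3 := by
    rw [Real.div_rpow (sq_nonneg _) (by positivity)]
    congr 1
    · rw [← sq_abs, ← Real.rpow_natCast |θ-π| 2, ← Real.rpow_mul (abs_nonneg _),
        ← Real.rpow_natCast |θ-π| 3]
      norm_num
    · rw [show 2 * Real.sqrt 2 = A^2 by rw [sq, hAA], ← Real.rpow_natCast A 2,
        ← Real.rpow_mul (le_of_lt hA0), ← Real.rpow_natCast A 3]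
      norm_num
  have P : a ^ ((3:ℝ)/2) * (|θ-π|^3/A^3) ≤ γ ^ ((3:ℝ)/2) * (1+Real.cos θ) ^ ((3:ℝ)/2) :=
    mul_le_mul hγ32 (hval ▸ hmono) (by positivity) (by positivity)
  have key : 2*Real.sqrt 2/3 * (1-γ) ^ ((3:ℝ)/2) + a ^ ((3:ℝ)/2)/(3*A)*|θ-π|^3
      ≤ 2*Real.sqrt 2/3 * (1 + γ*Real.cos θ) ^ ((3:ℝ)/2) := by
    rw [← hAA]
    have heq : a ^ ((3:ℝ)/2)/(3*A)*|θ-π|^3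
        = A*A/3 * (a ^ ((3:ℝ)/2)*(|θ-π|^3/A^3)) := by
      field_simp
    rw [heq]
    calc A*A/3*(1-γ) ^ ((3:ℝ)/2) + A*A/3 * (a ^ ((3:ℝ)/2)*(|θ-π|^3/A^3))
        = A*A/3*((1-γ) ^ ((3:ℝ)/2) + a ^ ((3:ℝ)/2)*(|θ-π|^3/A^3)) := by ring
      _ ≤ A*A/3*((1-γ) ^ ((3:ℝ)/2) + γ ^ ((3:ℝ)/2) * (1+Real.cos θ) ^ ((3:ℝ)/2)) := by
          apply mul_le_mul_of_nonneg_left (by linarith) (by positivity)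
      _ = A*A/3*((1-γ) ^ ((3:ℝ)/2) + (γ*(1+Real.cos θ)) ^ ((3:ℝ)/2)) := by rw [hmulγ]
      _ ≤ A*A/3*(1 + γ*Real.cos θ) ^ ((3:ℝ)/2) := by
          apply mul_le_mul_of_nonneg_left hsum (by positivity)
  rw [← Real.exp_add, Real.exp_le_exp]
  nlinarith [mul_le_mul_of_nonneg_left key hk]

theorem stmt17 (a : ℝ) (ha : 0 < a) (l : ℕ) (hl : 0 < l) :
    (∀ (k : ℕ) (t : ℝ), 0 < k → 2 * t / k ≤ 1 → a * k ≤ 2 * t →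
      (∫ θ in (3 * π / 4)..(5 * π / 4),
          Real.exp (-(2 * Real.sqrt 2 / 3) * k * (1 + 2 * t / k * Real.cos θ) ^ ((3 : ℝ) / 2)))
        ≤ Real.exp (-(2 * Real.sqrt 2 / 3) * k * (1 - 2 * t / k) ^ ((3 : ℝ) / 2)) *
          ∫ θ in (3 * π / 4)..(5 * π / 4),
            Real.exp (-(a ^ ((3 : ℝ) / 2) / (3 * (2 : ℝ) ^ ((3 : ℝ) / 4))) * k * |θ - π| ^ 3)) ∧
    (fun k : ℕ => ∫ θ in (3 * π / 4)..(5 * π / 4),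
        Real.exp (-(a ^ ((3 : ℝ) / 2) / (3 * (2 : ℝ) ^ ((3 : ℝ) / 4))) * k * |θ - π| ^ 3))
      =O[atTop] fun k : ℕ => (k : ℝ) ^ (-(1 : ℝ) / 3) := by
  constructor
  · intro k t hk hγ1 hat
    have hk0 : (0:ℝ) < k := by exact_mod_cast hk
    have haγ : a ≤ 2*t/(k:ℝ) := (le_div_iff₀ hk0).mpr hat
    have hab : 3*π/4 ≤ 5*π/4 := by linarith [Real.pi_pos]
    have hcont1 : Continuous fun θ:ℝ =>
        Real.exp (-(2 * Real.sqrt 2 / 3) * (k:ℝ) * (1 + 2*t/(k:ℝ) * Real.cos θ) ^ ((3:ℝ)/2)) := by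
      have hbase : Continuous fun θ:ℝ => 1 + 2*t/(k:ℝ) * Real.cos θ :=
        continuous_const.add (continuous_const.mul Real.continuous_cos)
      exact Real.continuous_exp.comp
        (continuous_const.mul (hbase.rpow_const (fun x => Or.inr (by norm_num))))
    have hcont2 : Continuous fun θ:ℝ =>
        Real.exp (-(a ^ ((3:ℝ)/2) / (3 * (2:ℝ) ^ ((3:ℝ)/4))) * (k:ℝ) * |θ - π| ^ 3) :=
      Real.continuous_exp.comp
        (continuous_const.mul (((continuous_id.sub continuous_const).abs).pow 3))
    have step := intervalIntegral.integral_mono_on (μ := MeasureTheory.volume) hab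
      (hcont1.intervalIntegrable _ _)
      ((continuous_const.mul hcont2).intervalIntegrable _ _)
      (fun θ hθ => aux_pointwise a (2*t/(k:ℝ)) ha haγ hγ1 (k:ℝ) (le_of_lt hk0) θ hθ)
    simp only [Pi.mul_apply] at step
    rw [intervalIntegral.integral_const_mul] at step
    exact step
  · set c := a ^ ((3:ℝ)/2) / (3 * (2:ℝ) ^ ((3:ℝ)/4)) with hc_def
    have hc : 0 < c := by rw [hc_def]; positivity
    have hgcont : Continuous fun v:ℝ => Real.exp (-(c*|v|^3)) :=
      Real.continuous_exp.comp ((continuous_const.mul (continuous_abs.pow 3)).neg)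
    have hInt : MeasureTheory.IntegrableOn (fun x:ℝ => Real.exp (-c * x ^ ((3:ℝ)))) (Set.Ioi 0) := by
      have h := integrableOn_rpow_mul_exp_neg_mul_rpow
        (by norm_num : (-1:ℝ) < 0) (by norm_num : (0:ℝ) < 3) hc
      refine h.congr_fun (fun x hx => ?_) measurableSet_Ioi
      beta_reduce
      rw [Real.rpow_zero, one_mul]
    set C := 2 * ∫ x in Set.Ioi (0:ℝ), Real.exp (-c * x ^ ((3:ℝ))) with hC_def
    rw [isBigO_iff]
    refine ⟨C, ?_⟩
    filter_upwards [eventually_ge_atTop 1] with k hk1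
    have hk0 : (0:ℝ) < k := by
      have : 0 < k := hk1
      exact_mod_cast this
    set m := (k:ℝ) ^ ((1:ℝ)/3) with hm_def
    have hm0 : 0 < m := Real.rpow_pos_of_pos hk0 _
    have hm3 : m ^ (3:ℕ) = (k:ℝ) := by
      rw [hm_def, ← Real.rpow_natCast ((k:ℝ) ^ ((1:ℝ)/3)) 3, ← Real.rpow_mul (le_of_lt hk0)]
      norm_num
    have h1 : (∫ θ in (3*π/4)..(5*π/4), Real.exp (-c * (k:ℝ) * |θ - π| ^ 3))
        = ∫ u in (-(π/4))..(π/4), Real.exp (-c * (k:ℝ) * |u| ^ 3) := by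
      have h := intervalIntegral.integral_comp_sub_right (a := 3*π/4) (b := 5*π/4)
        (fun u => Real.exp (-c * (k:ℝ) * |u| ^ 3)) π
      rw [show 3*π/4 - π = -(π/4) by ring, show 5*π/4 - π = π/4 by ring] at h
      exact h
    have h2 : (fun u:ℝ => Real.exp (-c * (k:ℝ) * |u| ^ 3))
        = fun u => Real.exp (-(c * |m*u| ^ 3)) := by
      funext u
      rw [abs_mul, mul_pow, abs_of_pos hm0, hm3]; ring_nf
    have h3 : (∫ u in (-(π/4))..(π/4), Real.exp (-(c * |m*u| ^ 3)))
        = m⁻¹ • ∫ v in (m*(-(π/4)))..(m*(π/4)), Real.exp (-(c * |v| ^ 3)) :=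
      intervalIntegral.integral_comp_mul_left (fun v => Real.exp (-(c * |v| ^ 3))) (ne_of_gt hm0)
    set M := m * (π/4) with hM_def
    have hM0 : 0 ≤ M := by positivity
    have hS0 : 0 ≤ ∫ v in (-M)..M, Real.exp (-(c * |v| ^ 3)) :=
      intervalIntegral.integral_nonneg (by linarith) (fun x _ => (Real.exp_pos _).le)
    have hhalf : (∫ v in (0:ℝ)..M, Real.exp (-(c * |v| ^ 3)))
        ≤ ∫ x in Set.Ioi (0:ℝ), Real.exp (-c * x ^ ((3:ℝ))) := by
      rw [intervalIntegral.integral_of_le hM0]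
      have heq : (∫ v in Set.Ioc 0 M, Real.exp (-(c * |v| ^ 3)))
          = ∫ v in Set.Ioc 0 M, Real.exp (-c * v ^ ((3:ℝ))) := by
        refine MeasureTheory.setIntegral_congr_fun measurableSet_Ioc (fun x hx => ?_)
        rw [abs_of_pos hx.1, ← Real.rpow_natCast x 3]
        push_cast
        ring_nf
      rw [heq]
      refine MeasureTheory.setIntegral_mono_set hInt
        (Filter.Eventually.of_forall fun x => (Real.exp_pos _).le)
        (Set.Ioc_subset_Ioi_self).eventuallyLE
    have hneg : (∫ v in (-M)..(0:ℝ), Real.exp (-(c * |v| ^ 3)))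
        = ∫ v in (0:ℝ)..M, Real.exp (-(c * |v| ^ 3)) := by
      have h := intervalIntegral.integral_comp_neg (a := (0:ℝ)) (b := M)
        (fun v => Real.exp (-(c * |v| ^ 3)))
      simp only [abs_neg, neg_zero] at h
      exact h.symm
    have hsplit := intervalIntegral.integral_add_adjacent_intervals
      (hgcont.intervalIntegrable (μ := MeasureTheory.volume) (-M) 0) (hgcont.intervalIntegrable (μ := MeasureTheory.volume) 0 M)
    have hSC : (∫ v in (-M)..M, Real.exp (-(c * |v| ^ 3))) ≤ C := by
      rw [← hsplit, hneg, hC_def]; linarith [hhalf]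
    have hnormk : ‖(k:ℝ) ^ (-(1:ℝ)/3)‖ = m⁻¹ := by
      rw [Real.norm_eq_abs, abs_of_pos (Real.rpow_pos_of_pos hk0 _),
        show (-(1:ℝ)/3) = -((1:ℝ)/3) by norm_num, Real.rpow_neg (le_of_lt hk0), hm_def]
    have hval2 : (∫ θ in (3*π/4)..(5*π/4), Real.exp (-c * (k:ℝ) * |θ - π| ^ 3))
        = m⁻¹ * ∫ v in (-M)..M, Real.exp (-(c * |v| ^ 3)) := by
      rw [h1, h2, h3, smul_eq_mul]
      congr 2
      rw [hM_def]; ring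
    rw [hval2, hnormk, Real.norm_eq_abs,
      abs_of_nonneg (mul_nonneg (inv_nonneg.mpr (le_of_lt hm0)) hS0)]
    calc m⁻¹ * (∫ v in (-M)..M, Real.exp (-(c * |v| ^ 3)))
        ≤ m⁻¹ * C := mul_le_mul_of_nonneg_left hSC (inv_nonneg.mpr (le_of_lt hm0))
      _ = C * m⁻¹ := mul_comm _ _
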